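/- Let J ⊂ k[x_1,…,x_n] be a pure difference binomial ideal over a field k. Then there exist a positive integer d and vectors a_1,…,a_n ∈ ℤ^d such that the toric ideal I_A of the configuration A = {a_1,…,a_n} is a minimal prime ideal of J. -/

import Mathlib

open MvPolynomial

variable (K : Type*) [Field K]

/-- The `A`-degree of an exponent vector `u ∈ ℕ^n` with respect to a configuration
`a : Fin n → (Fin d → ℤ)`, namely `∑ i, u i • a i ∈ ℤ^d`. -/
noncomputable def degA {n d : ℕ} (a : Fin n → Fin d → ℤ) (u : Fin n →₀ ℕ) : Fin d → ℤ :=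
  ∑ i, (u i : ℤ) • a i

/-- The toric ideal of the configuration `A = {a_1, …, a_n} ⊂ ℤ^d`: the ideal generated by all
binomials `x^u - x^v` with `∑ u_i a_i = ∑ v_i a_i`. -/
noncomputable def toricIdeal {n d : ℕ} (a : Fin n → Fin d → ℤ) :
    Ideal (MvPolynomial (Fin n) K) :=
  Ideal.span { f | ∃ u v : Fin n →₀ ℕ, degA a u = degA a v ∧
    f = monomial u (1 : K) - monomial v (1 : K) }

/-- A pure difference binomial ideal: an ideal generated by differences of monic monomials. -/
def IsPureDiffIdeal {n : ℕ} (J : Ideal (MvPolynomial (Fin n) K)) : Prop :=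
  ∃ S : Set (MvPolynomial (Fin n) K),
    (∀ f ∈ S, ∃ u v : Fin n →₀ ℕ, f = monomial u (1 : K) - monomial v (1 : K)) ∧
    J = Ideal.span S

/-! ### Auxiliary lemmas about `degA` -/

lemma degA_apply {n d : ℕ} (a : Fin n → Fin d → ℤ) (u : Fin n →₀ ℕ) (j : Fin d) :
    degA a u j = ∑ i, (u i : ℤ) * a i j := by
  simp [degA, Finset.sum_apply]

lemma degA_add {n d : ℕ} (a : Fin n → Fin d → ℤ) (u v : Fin n →₀ ℕ) :
    degA a (u + v) = degA a u + degA a v := by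
  funext j
  rw [Pi.add_apply, degA_apply, degA_apply, degA_apply, ← Finset.sum_add_distrib]
  refine Finset.sum_congr rfl fun i _ => ?_
  rw [Finsupp.add_apply]
  push_cast
  ring

lemma degA_nsmul {n d : ℕ} (a : Fin n → Fin d → ℤ) (k : ℕ) (u : Fin n →₀ ℕ) :
    degA a (k • u) = (k : ℤ) • degA a u := by
  funext j
  rw [Pi.smul_apply, smul_eq_mul, degA_apply, degA_apply, Finset.mul_sum]
  refine Finset.sum_congr rfl fun i _ => ?_
  rw [Finsupp.smul_apply, smul_eq_mul]
  push_cast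
  ring

/-! ### The toric homomorphism and the kernel description of the toric ideal -/

/-- The monomial homomorphism `x_i ↦ t^{a_i}` into the Laurent polynomial ring
(group algebra of `ℤ^d`). -/
noncomputable def phiA {n d : ℕ} (a : Fin n → Fin d → ℤ) :
    MvPolynomial (Fin n) K →ₐ[K] AddMonoidAlgebra K (Fin d → ℤ) :=
  aeval fun i => AddMonoidAlgebra.single (a i) 1

lemma phiA_monomial {n d : ℕ} (a : Fin n → Fin d → ℤ) (u : Fin n →₀ ℕ) (c : K) :
    phiA K a (monomial u c) = AddMonoidAlgebra.single (degA a u) c := by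
  rw [phiA, aeval_monomial, AddMonoidAlgebra.coe_algebraMap]
  rw [Finsupp.prod]
  have h1 : ∀ i ∈ u.support, AddMonoidAlgebra.single (a i) (1:K) ^ u i
      = AddMonoidAlgebra.single ((u i : ℤ) • a i) (1:K) := by
    intro i _
    rw [AddMonoidAlgebra.single_pow, one_pow, natCast_zsmul]
  rw [Finset.prod_congr rfl h1, AddMonoidAlgebra.prod_single, Finset.prod_const_one]
  have h2 : ∑ i ∈ u.support, (u i : ℤ) • a i = degA a u := by
    rw [degA]
    refine Finset.sum_subset (Finset.subset_univ _) ?_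
    intro i _ hi
    rw [Finsupp.notMem_support_iff] at hi
    simp [hi]
  rw [h2]
  simp [AddMonoidAlgebra.single_mul_single]

lemma phiA_binomial {n d : ℕ} (a : Fin n → Fin d → ℤ) (u v : Fin n →₀ ℕ)
    (h : degA a u = degA a v) :
    phiA K a (monomial u (1:K) - monomial v 1) = 0 := by
  rw [map_sub, phiA_monomial, phiA_monomial, h, sub_self]

lemma toric_le_ker {n d : ℕ} (a : Fin n → Fin d → ℤ) :
    toricIdeal K a ≤ RingHom.ker (phiA K a).toRingHom := by
  rw [toricIdeal, Ideal.span_le]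
  rintro f ⟨u, v, h, rfl⟩
  exact phiA_binomial K a u v h

lemma ker_le_toric {n d : ℕ} (a : Fin n → Fin d → ℤ) :
    RingHom.ker (phiA K a).toRingHom ≤ toricIdeal K a := by
  intro f hf
  have key : ∀ N : ℕ, ∀ f : MvPolynomial (Fin n) K, f.support.card ≤ N →
      phiA K a f = 0 → f ∈ toricIdeal K a := by
    intro N
    induction N with
    | zero =>
      intro f hcard _
      have : f.support = ∅ := Finset.card_eq_zero.mp (Nat.le_zero.mp hcard)
      rw [MvPolynomial.support_eq_empty.mp this]
      exact Ideal.zero_mem _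
    | succ N ih =>
      intro f hcard hker
      by_cases hf0 : f = 0
      · rw [hf0]; exact Ideal.zero_mem _
      · obtain ⟨u₀, hu₀⟩ : f.support.Nonempty := by
          rw [Finset.nonempty_iff_ne_empty]
          simpa [MvPolynomial.support_eq_empty] using hf0
        have hc0 : coeff u₀ f ≠ 0 := MvPolynomial.mem_support_iff.mp hu₀
        have hsum : ∑ u ∈ f.support, (if degA a u = degA a u₀ then coeff u f else 0) = 0 := by
          calc ∑ u ∈ f.support, (if degA a u = degA a u₀ then coeff u f else 0)
              = ∑ u ∈ f.support, (AddMonoidAlgebra.single (degA a u) (coeff u f)).coeff (degA a u₀) := by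
                refine Finset.sum_congr rfl fun u _ => ?_
                rw [AddMonoidAlgebra.coeff_single, Finsupp.single_apply]
            _ = (phiA K a f).coeff (degA a u₀) := by
                conv_rhs => rw [MvPolynomial.as_sum f]
                rw [map_sum]
                rw [Finset.sum_congr rfl fun u _ => phiA_monomial K a u (coeff u f)]
                rw [AddMonoidAlgebra.coeff_sum, Finsupp.finset_sum_apply]
            _ = 0 := by rw [hker]; rfl
        have hexists : ∃ v ∈ f.support, v ≠ u₀ ∧ degA a v = degA a u₀ := by
          by_contra hno
          push_neg at hno
          have : ∑ u ∈ f.support, (if degA a u = degA a u₀ then coeff u f else 0)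
              = coeff u₀ f := by
            rw [Finset.sum_eq_single u₀]
            · simp
            · intro v hv hvne
              simp only [ite_eq_right_iff]
              intro hd
              exact absurd hd (hno v hv hvne)
            · intro h; exact absurd hu₀ h
          exact hc0 (this ▸ hsum)
        obtain ⟨v, hv, hvne, hvd⟩ := hexists
        set c := coeff u₀ f with hc
        set bin := monomial u₀ (1:K) - monomial v 1 with hbin
        set g := f - C c * bin with hg
        have hbinmem : bin ∈ toricIdeal K a :=
          Ideal.subset_span ⟨u₀, v, hvd.symm, rfl⟩
        have hgker : phiA K a g = 0 := by
          rw [hg, map_sub, map_mul, phiA_binomial K a u₀ v hvd.symm, hker, mul_zero, sub_zero]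
        have hgsupp : g.support ⊆ f.support.erase u₀ := by
          intro w hw
          rw [MvPolynomial.mem_support_iff] at hw
          have hcw : coeff w g = coeff w f
              - c * ((if u₀ = w then (1:K) else 0) - (if v = w then 1 else 0)) := by
            rw [hg, hbin, coeff_sub, MvPolynomial.coeff_C_mul, coeff_sub, coeff_monomial,
              coeff_monomial]
          rw [Finset.mem_erase]
          constructor
          · intro hwu
            subst hwu
            apply hw
            rw [hcw, if_pos rfl, if_neg hvne, ← hc]
            ring
          · by_cases hwv : w = v
            · exact hwv ▸ hv
            · by_cases hwu : w = u₀
              · exact hwu ▸ hu₀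
              · rw [MvPolynomial.mem_support_iff]
                intro hfw
                apply hw
                rw [hcw, hfw, if_neg (fun h => hwu h.symm), if_neg (fun h => hwv h.symm)]
                ring
        have hcard' : g.support.card ≤ N := by
          have h1 : g.support.card < f.support.card :=
            lt_of_le_of_lt (Finset.card_le_card hgsupp) (Finset.card_erase_lt_of_mem hu₀)
          omega
        have hgmem := ih g hcard' hgker
        have : f = g + C c * bin := by rw [hg]; ring
        rw [this]
        exact Ideal.add_mem _ hgmem (Ideal.mul_mem_left _ _ hbinmem)
  exact key f.support.card f le_rfl hf

lemma toric_eq_ker {n d : ℕ} (a : Fin n → Fin d → ℤ) :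
    toricIdeal K a = RingHom.ker (phiA K a).toRingHom :=
  le_antisymm (toric_le_ker K a) (ker_le_toric K a)

lemma toric_isPrime {n d : ℕ} (a : Fin n → Fin d → ℤ) : (toricIdeal K a).IsPrime := by
  rw [toric_eq_ker]
  haveI : IsDomain (AddMonoidAlgebra K (Fin d → ℤ)) := NoZeroDivisors.to_isDomain _
  exact RingHom.ker_isPrime _

/-! ### Construction of the configuration from a lattice -/

lemma pi_decomp {n : ℕ} (w : Fin n → ℤ) : w = ∑ i, w i • Pi.single i (1:ℤ) := by
  funext j
  rw [Finset.sum_apply]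
  simp [Pi.single_apply]

lemma exists_config (n : ℕ) (L : Submodule ℤ (Fin n → ℤ)) :
    ∃ d : ℕ, 0 < d ∧ ∃ a : Fin n → Fin d → ℤ,
      ∀ u v : Fin n →₀ ℕ, (degA a u = degA a v ↔
        ∃ m : ℤ, m ≠ 0 ∧ m • ((fun i => (u i : ℤ)) - fun i => (v i : ℤ)) ∈ L) := by
  classical
  set Q := (Fin n → ℤ) ⧸ L with hQ
  set M := Q ⧸ Submodule.torsion ℤ Q with hM
  let π : (Fin n → ℤ) →ₗ[ℤ] M := (Submodule.torsion ℤ Q).mkQ.comp L.mkQ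
  let ι := Module.Free.ChooseBasisIndex ℤ M
  let b : Module.Basis ι ℤ M := Module.Free.chooseBasis ℤ M
  let e : ι ≃ Fin (Fintype.card ι) := Fintype.equivFin ι
  set d0 := Fintype.card ι with hd0
  set a : Fin n → Fin (d0 + 1) → ℤ := fun i j =>
    if h : (j : ℕ) < d0 then b.repr (π (Pi.single i 1)) (e.symm ⟨j, h⟩) else 0 with ha
  have hpi0 : ∀ w : Fin n → ℤ, (π w = 0 ↔ L.mkQ w ∈ Submodule.torsion ℤ Q) := by
    intro w
    rw [show π w = (Submodule.torsion ℤ Q).mkQ (L.mkQ w) from rfl, ← LinearMap.mem_ker,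
      Submodule.ker_mkQ]
  have hpiker : ∀ w : Fin n → ℤ, π w = 0 ↔ ∃ m : ℤ, m ≠ 0 ∧ m • w ∈ L := by
    intro w
    rw [hpi0]
    constructor
    · rintro ⟨m, hm⟩
      refine ⟨(m : ℤ), mem_nonZeroDivisors_iff_ne_zero.mp m.2, ?_⟩
      have h2 : L.mkQ ((m : ℤ) • w) = 0 := by
        rw [map_smul]
        exact_mod_cast hm
      rwa [← LinearMap.mem_ker, Submodule.ker_mkQ] at h2
    · rintro ⟨m, hm0, hmL⟩
      refine ⟨⟨m, mem_nonZeroDivisors_iff_ne_zero.mpr hm0⟩, ?_⟩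
      show m • L.mkQ w = 0
      rw [← map_smul, ← LinearMap.mem_ker, Submodule.ker_mkQ]
      exact hmL
  have hrepr : ∀ w : Fin n → ℤ,
      b.repr (π w) = ∑ i, w i • b.repr (π (Pi.single i 1)) := by
    intro w
    conv_lhs => rw [pi_decomp w]
    rw [map_sum, map_sum]
    refine Finset.sum_congr rfl fun i _ => ?_
    rw [map_smul, map_smul]
  have hdeg : ∀ (u : Fin n →₀ ℕ) (j : Fin (d0+1)) (h : (j : ℕ) < d0),
      degA a u j = b.repr (π (fun i => (u i : ℤ))) (e.symm ⟨j, h⟩) := by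
    intro u j h
    rw [degA_apply, hrepr]
    rw [Finsupp.finset_sum_apply]
    refine Finset.sum_congr rfl fun i _ => ?_
    rw [ha]
    simp only [dif_pos h, Finsupp.smul_apply, smul_eq_mul]
  refine ⟨d0 + 1, Nat.succ_pos _, a, fun u v => ?_⟩
  have hmain : degA a u = degA a v ↔
      π (fun i => (u i : ℤ)) = π (fun i => (v i : ℤ)) := by
    constructor
    · intro h
      have hr : b.repr (π (fun i => (u i : ℤ))) = b.repr (π (fun i => (v i : ℤ))) := by
        ext i0
        have hlt : (e i0 : ℕ) < d0 := (e i0).isLt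
        have hj := congrFun h ⟨(e i0 : ℕ), Nat.lt_succ_of_lt hlt⟩
        rw [hdeg u _ hlt, hdeg v _ hlt] at hj
        simpa using hj
      exact b.repr.injective hr
    · intro h
      funext j
      by_cases hj : (j : ℕ) < d0
      · rw [hdeg u j hj, hdeg v j hj, h]
      · rw [degA_apply, degA_apply]
        refine Finset.sum_congr rfl fun i _ => ?_
        rw [ha]
        simp only [dif_neg hj, mul_zero]
  rw [hmain]
  rw [← sub_eq_zero, ← map_sub]
  exact hpiker _


/-! ### The character argument for minimality -/

/-- The set of exponent-vector differences of binomials in `J`. -/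
def Gset {n : ℕ} (J : Ideal (MvPolynomial (Fin n) K)) : Set (Fin n → ℤ) :=
  {w | ∃ u v : Fin n →₀ ℕ, (monomial u (1:K) - monomial v 1) ∈ J ∧
    w = (fun i => (u i : ℤ)) - fun i => (v i : ℤ)}

section Character

variable {F : Type*} [Field F] {n : ℕ} (ρ : MvPolynomial (Fin n) K →+* F)
  (h : ∀ i, ρ (X i) ≠ 0)

/-- Units given by images of the variables. -/
noncomputable def xuD : Fin n → Fˣ := fun i => Units.mk0 (ρ (X i)) (h i)

/-- The multiplicative character `ℤ^n → Fˣ` induced by `ρ`. -/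
noncomputable def ZD (w : Fin n → ℤ) : Fˣ := ∏ i, xuD K ρ h i ^ (w i)

/-- The unit attached to a monomial. -/
noncomputable def UD (u : Fin n →₀ ℕ) : Fˣ := ∏ i, xuD K ρ h i ^ (u i)

lemma UD_val (u : Fin n →₀ ℕ) : ((UD K ρ h u : F)) = ρ (monomial u (1:K)) := by
  have hmonprod : (monomial u (1:K)) = ∏ i, X i ^ u i := by
    rw [monomial_eq, map_one, one_mul, Finsupp.prod]
    refine Finset.prod_subset (Finset.subset_univ _) ?_
    intro i _ hi
    rw [Finsupp.notMem_support_iff.mp hi, pow_zero]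
  rw [hmonprod, map_prod, UD]
  rw [show ((∏ i, xuD K ρ h i ^ u i : Fˣ) : F) = ∏ i, ((xuD K ρ h i ^ u i : Fˣ) : F) from
    map_prod (Units.coeHom F) _ _]
  refine Finset.prod_congr rfl fun i _ => ?_
  rw [Units.val_pow_eq_pow_val, xuD, Units.val_mk0, map_pow]

lemma UD_add (u v : Fin n →₀ ℕ) : UD K ρ h (u + v) = UD K ρ h u * UD K ρ h v := by
  rw [UD, UD, UD, ← Finset.prod_mul_distrib]
  refine Finset.prod_congr rfl fun i _ => ?_
  rw [Finsupp.add_apply, pow_add]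

lemma UD_smul (k : ℕ) (u : Fin n →₀ ℕ) : UD K ρ h (k • u) = UD K ρ h u ^ k := by
  rw [UD, UD, ← Finset.prod_pow]
  refine Finset.prod_congr rfl fun i _ => ?_
  rw [Finsupp.smul_apply, smul_eq_mul, pow_mul']

lemma ZD_smul (m : ℤ) (w : Fin n → ℤ) : ZD K ρ h (m • w) = ZD K ρ h w ^ m := by
  rw [ZD, ZD, ← Finset.prod_zpow]
  refine Finset.prod_congr rfl fun i _ => ?_
  rw [Pi.smul_apply, smul_eq_mul, mul_comm, zpow_mul]

lemma ZD_diff (u v : Fin n →₀ ℕ) :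
    ZD K ρ h ((fun i => (u i : ℤ)) - fun i => (v i : ℤ))
      = UD K ρ h u * (UD K ρ h v)⁻¹ := by
  rw [ZD, UD, UD]
  have : ∀ i : Fin n, xuD K ρ h i ^ (((fun i => (u i : ℤ)) - fun i => (v i : ℤ)) i)
      = xuD K ρ h i ^ (u i) * (xuD K ρ h i ^ (v i))⁻¹ := by
    intro i
    rw [Pi.sub_apply, zpow_sub, zpow_natCast, zpow_natCast]
  rw [Finset.prod_congr rfl fun i _ => this i, Finset.prod_mul_distrib,
    Finset.prod_inv_distrib]

/-- The kernel of the character `ZD`, as a `ℤ`-submodule of `ℤ^n`. -/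
noncomputable def PsiD : Submodule ℤ (Fin n → ℤ) where
  carrier := {w | ZD K ρ h w = 1}
  zero_mem' := by simp [ZD]
  add_mem' := by
    intro w₁ w₂ h1 h2
    have key : ZD K ρ h (w₁ + w₂) = ZD K ρ h w₁ * ZD K ρ h w₂ := by
      rw [ZD, ZD, ZD, ← Finset.prod_mul_distrib]
      refine Finset.prod_congr rfl fun i _ => ?_
      rw [Pi.add_apply, zpow_add]
    show ZD K ρ h (w₁ + w₂) = 1
    rw [key, h1, h2, one_mul]
  smul_mem' := by
    intro m w hw
    show ZD K ρ h (m • w) = 1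
    rw [ZD_smul, hw, one_zpow]

end Character

/-- In a field, the order of a torsion unit is invertible in the prime field. -/
lemma cast_orderOf_ne_zero {F : Type*} [Field F] (z : F) (hfin : IsOfFinOrder z) (hm₀ : 0 < orderOf z) :
    ((orderOf z : ℕ) : F) ≠ 0 := by
  set m₀ := orderOf z with hmdef
  intro hF0
  have hzm : z ^ m₀ = 1 := pow_orderOf_eq_one z
  obtain hp | hp0 := CharP.char_is_prime_or_zero F (ringChar F)
  · haveI : Fact (Nat.Prime (ringChar F)) := ⟨hp⟩
    haveI : CharP F (ringChar F) := ringChar.charP F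
    set p := ringChar F with hpdef
    have hdvd : p ∣ m₀ := (CharP.cast_eq_zero_iff F p m₀).mp hF0
    set y := z ^ (m₀ / p) with hy
    have hyp : y ^ p = 1 := by
      rw [hy, ← pow_mul, Nat.div_mul_cancel hdvd, hzm]
    have hy1 : y ≠ 1 := by
      intro h1
      have hdvd2 : m₀ ∣ m₀ / p := orderOf_dvd_of_pow_eq_one h1
      have hlt : m₀ / p < m₀ := Nat.div_lt_self hm₀ hp.one_lt
      have hpos : 0 < m₀ / p := Nat.div_pos (Nat.le_of_dvd hm₀ hdvd) hp.pos
      exact absurd (Nat.le_of_dvd hpos hdvd2) (not_le.mpr hlt)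
    have hsub : (y - 1 : F) ^ p = 0 := by
      rw [sub_pow_char, hyp, one_pow, sub_self]
    exact hy1 (sub_eq_zero.mp (pow_eq_zero_iff hp.ne_zero |>.mp hsub))
  · haveI : CharP F 0 := hp0 ▸ ringChar.charP F
    have h00 : (0 : ℕ) ∣ m₀ := (CharP.cast_eq_zero_iff F 0 m₀).mp hF0
    rw [Nat.zero_dvd] at h00
    omega

/-- The key minimality step: any prime between `J` and the toric ideal contains
the toric ideal. -/
lemma key_min {n d : ℕ} (a : Fin n → Fin d → ℤ) (J q : Ideal (MvPolynomial (Fin n) K))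
    (hJq : J ≤ q) (hqI : q ≤ toricIdeal K a)
    {F : Type*} [Field F] (ρ : MvPolynomial (Fin n) K →+* F)
    (hρmem : ∀ f : MvPolynomial (Fin n) K, ρ f = 0 ↔ f ∈ q)
    (hiff : ∀ u v : Fin n →₀ ℕ, degA a u = degA a v ↔
      ∃ m : ℤ, m ≠ 0 ∧ m • ((fun i => (u i : ℤ)) - fun i => (v i : ℤ)) ∈
        Submodule.span ℤ (Gset K J)) :
    toricIdeal K a ≤ q := by
  classical
  have hmono : ∀ u : Fin n →₀ ℕ, ρ (monomial u (1:K)) ≠ 0 := by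
    intro u hu
    have h1 : monomial u (1:K) ∈ toricIdeal K a := hqI ((hρmem _).mp hu)
    rw [toric_eq_ker] at h1
    have h2 : phiA K a (monomial u 1) = 0 := h1
    rw [phiA_monomial] at h2
    exact one_ne_zero (AddMonoidAlgebra.single_eq_zero.mp h2)
  have hX : ∀ i, ρ (X i) ≠ 0 := fun i => hmono (Finsupp.single i 1)
  have hGPsi : Gset K J ⊆ PsiD K ρ hX := by
    rintro w ⟨u, v, hmemJ, rfl⟩
    show ZD K ρ hX ((fun i => (u i : ℤ)) - fun i => (v i : ℤ)) = 1
    rw [ZD_diff]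
    have h0 : ρ (monomial u (1:K) - monomial v 1) = 0 := (hρmem _).mpr (hJq hmemJ)
    rw [map_sub, sub_eq_zero] at h0
    have hUuv : UD K ρ hX u = UD K ρ hX v := Units.ext (by rw [UD_val, UD_val, h0])
    exact mul_inv_eq_one.mpr hUuv
  have hLP : Submodule.span ℤ (Gset K J) ≤ PsiD K ρ hX := Submodule.span_le.mpr hGPsi
  rw [toricIdeal, Ideal.span_le]
  rintro f ⟨u, v, hdeg, rfl⟩
  obtain ⟨m, hm0, hmw⟩ := (hiff u v).mp hdeg
  have hpow : (UD K ρ hX u * (UD K ρ hX v)⁻¹) ^ m = 1 := by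
    have h1 : ZD K ρ hX (m • ((fun i => (u i : ℤ)) - fun i => (v i : ℤ))) = 1 := hLP hmw
    rw [ZD_smul, ZD_diff] at h1
    exact h1
  set ζ : Fˣ := UD K ρ hX u * (UD K ρ hX v)⁻¹ with hζ
  have hfin : IsOfFinOrder ζ := isOfFinOrder_iff_zpow_eq_one.mpr ⟨m, hm0, hpow⟩
  have hζ1 : ζ = 1 := by
    by_contra hne
    set m₀ := orderOf ζ with hm₀
    have hm₀pos : 0 < m₀ := hfin.orderOf_pos
    set z : F := (ζ : F) with hz
    have hz1 : z ≠ 1 := fun hh => hne (Units.ext (by rw [← hz]; exact hh))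
    have hzm : z ^ m₀ = 1 := by
      rw [hz, ← Units.val_pow_eq_pow_val, pow_orderOf_eq_one, Units.val_one]
    have hoz : orderOf z = m₀ := by rw [hz, orderOf_units]
    have hzfin : IsOfFinOrder z := by
      rw [← orderOf_pos_iff, hoz]; exact hm₀pos
    have hF0 : ((m₀ : ℕ) : F) ≠ 0 := by
      have := cast_orderOf_ne_zero z hzfin (by rw [hoz]; exact hm₀pos)
      rwa [hoz] at this
    have hK0 : ((m₀ : ℕ) : K) ≠ 0 := by
      intro h0
      apply hF0
      have : ((m₀ : ℕ) : F) = (ρ.comp (MvPolynomial.C)) ((m₀ : ℕ) : K) := by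
        rw [map_natCast]
      rw [this, h0, map_zero]
    have hgeom : ∑ i ∈ Finset.range m₀, z ^ i = 0 := by
      rw [geom_sum_eq hz1, hzm, sub_self, zero_div]
    set fco : MvPolynomial (Fin n) K :=
      ∑ i ∈ Finset.range m₀, monomial (i • u + (m₀ - 1 - i) • v) 1 with hfco
    have hUuz : (UD K ρ hX u : F) = z * (UD K ρ hX v : F) := by
      have hh : ζ * UD K ρ hX v = UD K ρ hX u := by
        rw [hζ]; exact inv_mul_cancel_right _ _
      rw [← hh, Units.val_mul, hz]
    have hρf : ρ fco = 0 := by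
      rw [hfco, map_sum]
      have hterm : ∀ i ∈ Finset.range m₀, ρ (monomial (i • u + (m₀ - 1 - i) • v) (1:K))
          = z ^ i * ((UD K ρ hX v : F)) ^ (m₀ - 1) := by
        intro i hi
        rw [← UD_val K ρ hX, UD_add, UD_smul, UD_smul, Units.val_mul, Units.val_pow_eq_pow_val,
          Units.val_pow_eq_pow_val, hUuz, mul_pow, mul_assoc, ← pow_add]
        congr 2
        have := Finset.mem_range.mp hi
        omega
      rw [Finset.sum_congr rfl hterm, ← Finset.sum_mul, hgeom, zero_mul]
    have hfI : fco ∈ toricIdeal K a := hqI ((hρmem fco).mp hρf)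
    rw [toric_eq_ker] at hfI
    have hφf : phiA K a fco = 0 := hfI
    have hdegc : ∀ i ∈ Finset.range m₀, degA a (i • u + (m₀ - 1 - i) • v)
        = ((m₀ - 1 : ℕ) : ℤ) • degA a u := by
      intro i hi
      rw [degA_add, degA_nsmul, degA_nsmul, hdeg, ← add_smul]
      congr 1
      have := Finset.mem_range.mp hi
      push_cast [Nat.sub_sub]
      omega
    have hφval : phiA K a fco
        = AddMonoidAlgebra.single (((m₀ - 1 : ℕ) : ℤ) • degA a u) ((m₀ : ℕ) : K) := by
      rw [hfco, map_sum]
      rw [Finset.sum_congr rfl fun i hi => by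
        rw [phiA_monomial, hdegc i hi]]
      rw [Finset.sum_const, Finset.card_range, AddMonoidAlgebra.smul_single, nsmul_eq_mul, mul_one]
    rw [hφval] at hφf
    exact hK0 (AddMonoidAlgebra.single_eq_zero.mp hφf)
  have hUuv : UD K ρ hX u = UD K ρ hX v := by
    rw [hζ] at hζ1
    rwa [mul_inv_eq_one] at hζ1
  have hρ0 : ρ (monomial u (1:K) - monomial v 1) = 0 := by
    rw [map_sub, ← UD_val K ρ hX, ← UD_val K ρ hX, hUuv, sub_self]
  exact (hρmem _).mp hρ0

/-- For every pure difference binomial ideal `J ⊂ k[x_1,…,x_n]` there exist a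
positive integer `d` and vectors `a_1, …, a_n ∈ ℤ^d` such that the toric ideal `I_A` of the
configuration `A = {a_1,…,a_n}` is a minimal prime of `J`. -/
theorem statement0 {n : ℕ} (J : Ideal (MvPolynomial (Fin n) K))
    (hJ : IsPureDiffIdeal K J) :
    ∃ d : ℕ, 0 < d ∧ ∃ a : Fin n → Fin d → ℤ, toricIdeal K a ∈ J.minimalPrimes := by
  classical
  obtain ⟨S, hSbin, hJS⟩ := hJ
  obtain ⟨d, hd, a, hiff⟩ := exists_config n (Submodule.span ℤ (Gset K J))
  refine ⟨d, hd, a, ?_⟩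
  have hIprime : (toricIdeal K a).IsPrime := toric_isPrime K a
  have hJle : J ≤ toricIdeal K a := by
    conv_lhs => rw [hJS]
    rw [Ideal.span_le]
    intro f hf
    obtain ⟨u, v, rfl⟩ := hSbin f hf
    have hfJ : (monomial u (1:K) - monomial v 1) ∈ J := hJS ▸ Ideal.subset_span hf
    have hw : ((fun i => (u i : ℤ)) - fun i => (v i : ℤ)) ∈ Submodule.span ℤ (Gset K J) :=
      Submodule.subset_span ⟨u, v, hfJ, rfl⟩
    have hdeg : degA a u = degA a v := (hiff u v).mpr ⟨1, one_ne_zero, by simpa using hw⟩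
    exact Ideal.subset_span ⟨u, v, hdeg, rfl⟩
  have hmin : ∀ q : Ideal (MvPolynomial (Fin n) K), q.IsPrime → J ≤ q →
      q ≤ toricIdeal K a → toricIdeal K a ≤ q := by
    intro q hq hJq hqI
    haveI := hq
    exact key_min K a J q hJq hqI
      ((algebraMap (MvPolynomial (Fin n) K ⧸ q)
        (FractionRing (MvPolynomial (Fin n) K ⧸ q))).comp (Ideal.Quotient.mk q))
      (fun f => by
        rw [RingHom.comp_apply,
          map_eq_zero_iff _ (IsFractionRing.injective (MvPolynomial (Fin n) K ⧸ q)
            (FractionRing (MvPolynomial (Fin n) K ⧸ q))),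
          Ideal.Quotient.eq_zero_iff_mem])
      hiff
  exact ⟨⟨hIprime, hJle⟩, fun q hq hle => hmin q hq.1 hq.2 hle⟩
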